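/- For every β with 0 < β < 2π there exists a constant C₃(β) > 0 such that |∂_k² f(x)| ≤ C₃(β)/‖x‖⁴ for k = 1,2 and all x ∈ [−2π+β, 2π−β] × [−2π+β, 2π−β] \ {0}. -/

import Mathlib

open Real

noncomputable section

/-- `ψ(x) = 1 − (1/L) ∑_{ℓ=1}^L cos(s_ℓ · x)`. -/
def psi (L : ℕ) (s : Fin L → ℤ × ℤ) (x y : ℝ) : ℝ :=
  1 - (1 / L) * ∑ ℓ, Real.cos ((s ℓ).1 * x + (s ℓ).2 * y)

/-- `f = 1/ψ`. -/
def f (L : ℕ) (s : Fin L → ℤ × ℤ) (x y : ℝ) : ℝ := 1 / psi L s x y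

/- ### Auxiliary lemmas -/

lemma aux_hD0 {L : ℕ} (a c : Fin L → ℝ) (t : ℝ) :
    HasDerivAt (fun t => 1 - (1/(L:ℝ)) * ∑ ℓ, Real.cos (a ℓ * t + c ℓ))
      ((1/(L:ℝ)) * ∑ ℓ, a ℓ * Real.sin (a ℓ * t + c ℓ)) t := by
  have h : HasDerivAt (fun t => ∑ ℓ : Fin L, Real.cos (a ℓ * t + c ℓ))
      (∑ ℓ : Fin L, -Real.sin (a ℓ * t + c ℓ) * (a ℓ * 1)) t := by
    apply HasDerivAt.fun_sum
    intro ℓ _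
    exact (((hasDerivAt_id t).const_mul (a ℓ)).add_const (c ℓ)).cos
  have h2 := (h.const_mul (1/(L:ℝ))).const_sub 1
  refine h2.congr_deriv (Eq.symm ?_)
  rw [Finset.mul_sum, Finset.mul_sum,
    ← neg_neg (∑ ℓ : Fin L, 1/(L:ℝ) * (a ℓ * Real.sin (a ℓ * t + c ℓ))), ← Finset.sum_neg_distrib]
  congr 1
  exact Finset.sum_congr rfl fun ℓ _ => by ring

lemma aux_hD1 {L : ℕ} (a c : Fin L → ℝ) (t : ℝ) :
    HasDerivAt (fun t => (1/(L:ℝ)) * ∑ ℓ, a ℓ * Real.sin (a ℓ * t + c ℓ))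
      ((1/(L:ℝ)) * ∑ ℓ, a ℓ^2 * Real.cos (a ℓ * t + c ℓ)) t := by
  have h : HasDerivAt (fun t => ∑ ℓ : Fin L, a ℓ * Real.sin (a ℓ * t + c ℓ))
      (∑ ℓ : Fin L, a ℓ * (Real.cos (a ℓ * t + c ℓ) * (a ℓ * 1))) t := by
    apply HasDerivAt.fun_sum
    intro ℓ _
    exact ((((hasDerivAt_id t).const_mul (a ℓ)).add_const (c ℓ)).sin).const_mul (a ℓ)
  have h2 := h.const_mul (1/(L:ℝ))
  refine h2.congr_deriv ?_
  rw [Finset.mul_sum, Finset.mul_sum]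
  exact Finset.sum_congr rfl fun ℓ _ => by ring

lemma aux_alg2 (p q r : ℝ) (hp : p ≠ 0) :
    (-r * p^2 - -q * ((2:ℕ) * p^(2-1) * q)) / (p^2)^2 = (2*q^2 - r*p)/p^3 := by
  field_simp
  ring

lemma aux_iter2_eq {L : ℕ} (a c : Fin L → ℝ) (x : ℝ)
    (hx : 0 < 1 - (1/(L:ℝ)) * ∑ ℓ, Real.cos (a ℓ * x + c ℓ)) :
    iteratedDeriv 2 (fun t => 1 / (1 - (1/(L:ℝ)) * ∑ ℓ, Real.cos (a ℓ * t + c ℓ))) x =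
      (2 * ((1/(L:ℝ)) * ∑ ℓ, a ℓ * Real.sin (a ℓ * x + c ℓ))^2
        - ((1/(L:ℝ)) * ∑ ℓ, a ℓ^2 * Real.cos (a ℓ * x + c ℓ))
          * (1 - (1/(L:ℝ)) * ∑ ℓ, Real.cos (a ℓ * x + c ℓ)))
      / (1 - (1/(L:ℝ)) * ∑ ℓ, Real.cos (a ℓ * x + c ℓ))^3 := by
  have hcont : Continuous (fun t => 1 - (1/(L:ℝ)) * ∑ ℓ, Real.cos (a ℓ * t + c ℓ)) := by
    fun_prop
  have hU : IsOpen ((fun t => 1 - (1/(L:ℝ)) * ∑ ℓ, Real.cos (a ℓ * t + c ℓ)) ⁻¹' (Set.Ioi 0)) :=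
    hcont.isOpen_preimage _ isOpen_Ioi
  have hder : ∀ t, 0 < (1 - (1/(L:ℝ)) * ∑ ℓ, Real.cos (a ℓ * t + c ℓ)) →
      HasDerivAt (fun t => 1 / (1 - (1/(L:ℝ)) * ∑ ℓ, Real.cos (a ℓ * t + c ℓ)))
        (-((1/(L:ℝ)) * ∑ ℓ, a ℓ * Real.sin (a ℓ * t + c ℓ))
          / (1 - (1/(L:ℝ)) * ∑ ℓ, Real.cos (a ℓ * t + c ℓ))^2) t := by
    intro t ht
    simpa only [one_div] using (aux_hD0 a c t).fun_inv (ne_of_gt ht)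
  have heq : deriv (fun t => 1 / (1 - (1/(L:ℝ)) * ∑ ℓ, Real.cos (a ℓ * t + c ℓ)))
      =ᶠ[nhds x] fun t => -((1/(L:ℝ)) * ∑ ℓ, a ℓ * Real.sin (a ℓ * t + c ℓ))
          / (1 - (1/(L:ℝ)) * ∑ ℓ, Real.cos (a ℓ * t + c ℓ))^2 :=
    Filter.eventually_of_mem (hU.mem_nhds hx) (fun t ht => (hder t ht).deriv)
  rw [iteratedDeriv_succ, iteratedDeriv_one, heq.deriv_eq]
  have hd2 := ((aux_hD1 a c x).fun_neg).fun_div ((aux_hD0 a c x).fun_pow 2) (pow_ne_zero 2 (ne_of_gt hx))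
  rw [hd2.deriv]
  exact aux_alg2 _ _ _ (ne_of_gt hx)

lemma aux_sin_lower (M : ℝ) (hM0 : 0 < M) (hMπ : M < π) (u : ℝ) (hu : 0 ≤ u) (huM : u ≤ M) :
    Real.sin M / M * u ≤ Real.sin u := by
  have hconc := strictConcaveOn_sin_Icc.concaveOn.2
    (Set.mem_Icc.2 ⟨le_rfl, Real.pi_pos.le⟩) (Set.mem_Icc.2 ⟨hM0.le, hMπ.le⟩)
    (sub_nonneg.2 ((div_le_one hM0).2 huM) : (0:ℝ) ≤ 1 - u/M)
    (div_nonneg hu hM0.le : (0:ℝ) ≤ u/M) (by ring : (1 - u/M) + u/M = 1)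
  have h1 : (1 - u/M) • (0:ℝ) + (u/M) • M = u := by
    simp only [smul_eq_mul, mul_zero, zero_add]
    field_simp
  rw [h1] at hconc
  have h3 : (1 - u/M) • Real.sin 0 + (u/M) • Real.sin M = Real.sin M / M * u := by
    simp [Real.sin_zero, smul_eq_mul]; ring
  linarith [h3 ▸ hconc]

lemma aux_one_sub_cos_lower (β : ℝ) (hβ0 : 0 < β) (hβ2π : β < 2*π) (t : ℝ)
    (ht : |t| ≤ 2*π - β) :
    (Real.sin (π - β/2) / (π - β/2))^2 / 2 * t^2 ≤ 1 - Real.cos t := by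
  set M := π - β/2 with hM
  have hM0 : 0 < M := by rw [hM]; linarith
  have hMπ : M < π := by rw [hM]; linarith
  set k := Real.sin M / M with hk
  have hkpos : 0 < k := div_pos (Real.sin_pos_of_pos_of_lt_pi hM0 hMπ) hM0
  have h2 : 1 - Real.cos t = 2 * Real.sin (t/2)^2 := by
    have := Real.sin_sq_eq_half_sub (t/2)
    rw [show 2*(t/2) = t by ring] at this
    linarith
  have habs : Real.sin (t/2)^2 = Real.sin (|t|/2)^2 := by
    rcases abs_cases t with ⟨h, _⟩ | ⟨h, _⟩
    · rw [h]
    · rw [h]; rw [neg_div, Real.sin_neg]; ring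
  have huM : |t|/2 ≤ M := by rw [hM]; linarith
  have hu0 : 0 ≤ |t|/2 := by positivity
  have hs := aux_sin_lower M hM0 hMπ (|t|/2) hu0 huM
  have hsq : (k * (|t|/2))^2 ≤ Real.sin (|t|/2)^2 :=
    pow_le_pow_left₀ (mul_nonneg hkpos.le hu0) hs 2
  have htt : |t|^2 = t^2 := sq_abs t
  rw [h2, habs]
  nlinarith [hsq, htt]

lemma aux_bound (G0 G1 G2 S c r2 : ℝ) (hc : 0 < c) (hS : 0 ≤ S) (hr2 : 0 < r2)
    (h0 : c * r2 ≤ G0) (h1 : G1^2 ≤ S^2 * r2) (h2 : |G2| ≤ S) :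
    |(2*G1^2 - G2*G0)/G0^3| ≤ (2*S^2/c^3 + S/c^2) / r2^2 := by
  have hG0 : 0 < G0 := lt_of_lt_of_le (by positivity) h0
  rw [abs_div, abs_of_pos (by positivity : (0:ℝ) < G0^3)]
  have hnum : |2*G1^2 - G2*G0| ≤ 2*S^2*r2 + S*G0 := by
    have e1 : |2*G1^2 - G2*G0| ≤ |2*G1^2| + |G2*G0| := abs_sub _ _
    have e2 : |2*G1^2| = 2*G1^2 := abs_of_nonneg (by positivity)
    have e3 : |G2*G0| = |G2| * G0 := by rw [abs_mul, abs_of_pos hG0]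
    have e4 : |G2| * G0 ≤ S * G0 := mul_le_mul_of_nonneg_right h2 hG0.le
    nlinarith [e1, e2, e3, e4, h1]
  calc |2*G1^2 - G2*G0| / G0^3 ≤ (2*S^2*r2 + S*G0) / G0^3 := by gcongr
    _ = 2*S^2*r2/G0^3 + S/G0^2 := by field_simp
    _ ≤ 2*S^2*r2/(c*r2)^3 + S/(c*r2)^2 := by gcongr <;> positivity
    _ = (2*S^2/c^3 + S/c^2) / r2^2 := by field_simp

lemma aux_G1_bound {L : ℕ} (a b : Fin L → ℝ) (x y : ℝ) :
    |(1/(L:ℝ)) * ∑ ℓ, a ℓ * Real.sin (a ℓ * x + b ℓ * y)| ≤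
      ((1/(L:ℝ)) * ∑ ℓ, (|a ℓ| + |b ℓ|)^2) * Real.sqrt (x^2 + y^2) := by
  have hL : (0:ℝ) ≤ 1/(L:ℝ) := by positivity
  have hxr : |x| ≤ Real.sqrt (x^2 + y^2) := by
    rw [← Real.sqrt_sq_eq_abs]
    exact Real.sqrt_le_sqrt (by nlinarith [sq_nonneg y])
  have hyr : |y| ≤ Real.sqrt (x^2 + y^2) := by
    rw [← Real.sqrt_sq_eq_abs]
    exact Real.sqrt_le_sqrt (by nlinarith [sq_nonneg x])
  calc |(1/(L:ℝ)) * ∑ ℓ, a ℓ * Real.sin (a ℓ * x + b ℓ * y)|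
      = (1/(L:ℝ)) * |∑ ℓ, a ℓ * Real.sin (a ℓ * x + b ℓ * y)| := by
        rw [abs_mul, abs_of_nonneg hL]
    _ ≤ (1/(L:ℝ)) * ∑ ℓ, |a ℓ * Real.sin (a ℓ * x + b ℓ * y)| := by
        gcongr
        exact Finset.abs_sum_le_sum_abs _ _
    _ ≤ (1/(L:ℝ)) * ∑ ℓ, (|a ℓ| + |b ℓ|)^2 * Real.sqrt (x^2 + y^2) := by
        gcongr with ℓ hℓ
        have hsin : |Real.sin (a ℓ * x + b ℓ * y)| ≤ |a ℓ * x + b ℓ * y| :=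
          Real.abs_sin_le_abs
        have harg : |a ℓ * x + b ℓ * y| ≤ |a ℓ| * |x| + |b ℓ| * |y| := by
          calc |a ℓ * x + b ℓ * y| ≤ |a ℓ * x| + |b ℓ * y| := abs_add_le _ _
            _ = |a ℓ| * |x| + |b ℓ| * |y| := by rw [abs_mul, abs_mul]
        have hr : (0:ℝ) ≤ Real.sqrt (x^2 + y^2) := Real.sqrt_nonneg _
        calc |a ℓ * Real.sin (a ℓ * x + b ℓ * y)|
            = |a ℓ| * |Real.sin (a ℓ * x + b ℓ * y)| := abs_mul _ _
          _ ≤ |a ℓ| * (|a ℓ| * |x| + |b ℓ| * |y|) := by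
              exact mul_le_mul_of_nonneg_left (hsin.trans harg) (abs_nonneg _)
          _ ≤ |a ℓ| * ((|a ℓ| + |b ℓ|) * Real.sqrt (x^2 + y^2)) := by
              have := abs_nonneg (a ℓ); have := abs_nonneg (b ℓ)
              gcongr
              nlinarith [mul_le_mul_of_nonneg_left hxr (abs_nonneg (a ℓ)),
                mul_le_mul_of_nonneg_left hyr (abs_nonneg (b ℓ))]
          _ = (|a ℓ| * (|a ℓ| + |b ℓ|)) * Real.sqrt (x^2 + y^2) := by ring
          _ ≤ ((|a ℓ| + |b ℓ|)^2) * Real.sqrt (x^2 + y^2) := by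
              have hstep : |a ℓ| * (|a ℓ| + |b ℓ|) ≤ (|a ℓ| + |b ℓ|)^2 := by
                nlinarith [abs_nonneg (a ℓ), abs_nonneg (b ℓ)]
              exact mul_le_mul_of_nonneg_right hstep hr
    _ = ((1/(L:ℝ)) * ∑ ℓ, (|a ℓ| + |b ℓ|)^2) * Real.sqrt (x^2 + y^2) := by
        rw [← Finset.sum_mul]; ring

lemma aux_G2_bound {L : ℕ} (a b : Fin L → ℝ) (θ : Fin L → ℝ) :
    |(1/(L:ℝ)) * ∑ ℓ, a ℓ^2 * Real.cos (θ ℓ)| ≤ (1/(L:ℝ)) * ∑ ℓ, (|a ℓ| + |b ℓ|)^2 := by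
  have hL : (0:ℝ) ≤ 1/(L:ℝ) := by positivity
  calc |(1/(L:ℝ)) * ∑ ℓ, a ℓ^2 * Real.cos (θ ℓ)|
      = (1/(L:ℝ)) * |∑ ℓ, a ℓ^2 * Real.cos (θ ℓ)| := by rw [abs_mul, abs_of_nonneg hL]
    _ ≤ (1/(L:ℝ)) * ∑ ℓ, |a ℓ^2 * Real.cos (θ ℓ)| := by
        gcongr
        exact Finset.abs_sum_le_sum_abs _ _
    _ ≤ (1/(L:ℝ)) * ∑ ℓ, (|a ℓ| + |b ℓ|)^2 := by
        gcongr with ℓ hℓ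
        have h1 : |Real.cos (θ ℓ)| ≤ 1 := Real.abs_cos_le_one _
        have h2 : |a ℓ^2 * Real.cos (θ ℓ)| = a ℓ^2 * |Real.cos (θ ℓ)| := by
          rw [abs_mul, abs_of_nonneg (sq_nonneg _)]
        nlinarith [sq_nonneg (a ℓ), abs_nonneg (b ℓ), abs_nonneg (a ℓ), sq_abs (a ℓ),
          mul_le_mul_of_nonneg_left h1 (sq_nonneg (a ℓ))]

/-- for every `β ∈ (0, 2π)` there is `C₃(β) > 0` such that for `k = 1,2`,
`|∂_k² f(x)| ≤ C₃(β)/‖x‖⁴` on `[−2π+β, 2π−β]² \ {0}`. -/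
theorem second_partials_f_bound (L : ℕ) (hL : 2 ≤ L) (s : Fin L → ℤ × ℤ)
    (hs : ∀ ℓ, s ℓ ≠ 0)
    (h1 : s ⟨0, by omega⟩ = (1, 0)) (h2 : s ⟨1, by omega⟩ = (0, 1))
    (β : ℝ) (hβ0 : 0 < β) (hβ2π : β < 2 * π) :
    ∃ C₃ : ℝ, 0 < C₃ ∧
      ∀ x y : ℝ, x ∈ Set.Icc (-(2 * π) + β) (2 * π - β) →
        y ∈ Set.Icc (-(2 * π) + β) (2 * π - β) → (x, y) ≠ (0, 0) →
        |iteratedDeriv 2 (fun t => f L s t y) x| ≤ C₃ / Real.sqrt (x ^ 2 + y ^ 2) ^ 4 ∧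
        |iteratedDeriv 2 (fun t => f L s x t) y| ≤ C₃ / Real.sqrt (x ^ 2 + y ^ 2) ^ 4 := by
  have hLpos : (0:ℝ) < L := by positivity
  -- linear-growth constant for `1 - cos`
  set c₁ : ℝ := (Real.sin (π - β/2) / (π - β/2))^2 / 2 with hc₁def
  have hc₁ : 0 < c₁ := by
    have hM0 : 0 < π - β/2 := by linarith
    have hMπ : π - β/2 < π := by linarith
    have := Real.sin_pos_of_pos_of_lt_pi hM0 hMπ
    rw [hc₁def]; positivity
  set c : ℝ := c₁ / L with hcdef
  have hc : 0 < c := by rw [hcdef]; positivity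
  set S : ℝ := (1/(L:ℝ)) * ∑ ℓ, (|((s ℓ).1 : ℝ)| + |((s ℓ).2 : ℝ)|)^2 with hSdef
  have hS : 0 ≤ S := by rw [hSdef]; positivity
  refine ⟨2*S^2/c^3 + S/c^2 + 1, by positivity, ?_⟩
  intro x y hx hy hne
  set r2 : ℝ := x^2 + y^2 with hr2def
  have hr2 : 0 < r2 := by
    rcases (not_and_or.1 (fun h : x = 0 ∧ y = 0 => hne (by rw [h.1, h.2]))) with h | h
    · have : 0 < x^2 := (sq_nonneg x).lt_of_ne (Ne.symm (pow_ne_zero 2 h))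
      nlinarith [sq_nonneg y]
    · have : 0 < y^2 := (sq_nonneg y).lt_of_ne (Ne.symm (pow_ne_zero 2 h))
      nlinarith [sq_nonneg x]
  have hxabs : |x| ≤ 2*π - β := abs_le.2 ⟨by linarith [hx.1], hx.2⟩
  have hyabs : |y| ≤ 2*π - β := abs_le.2 ⟨by linarith [hy.1], hy.2⟩
  -- lower bound for psi
  have hpsi_eq : psi L s x y
      = (1/(L:ℝ)) * ∑ ℓ, (1 - Real.cos (((s ℓ).1 : ℝ) * x + ((s ℓ).2 : ℝ) * y)) := by
    unfold psi
    rw [Finset.sum_sub_distrib, Finset.sum_const, Finset.card_univ, Fintype.card_fin,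
      nsmul_eq_mul]
    field_simp
    congr 1
    exact Finset.sum_congr rfl fun ℓ _ => by ring_nf
  have hpsi_lb : c * r2 ≤ psi L s x y := by
    set i0 : Fin L := ⟨0, by omega⟩ with hi0
    set i1 : Fin L := ⟨1, by omega⟩ with hi1
    have hne01 : i0 ≠ i1 := by
      rw [hi0, hi1]; intro h; simpa using congrArg Fin.val h
    have hsum_le : ∑ ℓ ∈ ({i0, i1} : Finset (Fin L)),
          (1 - Real.cos (((s ℓ).1 : ℝ) * x + ((s ℓ).2 : ℝ) * y))
        ≤ ∑ ℓ, (1 - Real.cos (((s ℓ).1 : ℝ) * x + ((s ℓ).2 : ℝ) * y)) := by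
      apply Finset.sum_le_sum_of_subset_of_nonneg (Finset.subset_univ _)
      intro i _ _
      have := Real.cos_le_one (((s i).1 : ℝ) * x + ((s i).2 : ℝ) * y)
      linarith
    rw [Finset.sum_pair hne01] at hsum_le
    have ht0 : (1 - Real.cos (((s i0).1 : ℝ) * x + ((s i0).2 : ℝ) * y)) = 1 - Real.cos x := by
      rw [h1]; norm_num
    have ht1 : (1 - Real.cos (((s i1).1 : ℝ) * x + ((s i1).2 : ℝ) * y)) = 1 - Real.cos y := by
      rw [h2]; norm_num
    rw [ht0, ht1] at hsum_le
    have hbx := aux_one_sub_cos_lower β hβ0 hβ2π x hxabs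
    have hby := aux_one_sub_cos_lower β hβ0 hβ2π y hyabs
    rw [← hc₁def] at hbx hby
    rw [hpsi_eq, hcdef, hr2def]
    have hstep : c₁ * (x^2 + y^2) ≤ ∑ ℓ, (1 - Real.cos (((s ℓ).1 : ℝ) * x + ((s ℓ).2 : ℝ) * y)) := by
      nlinarith [hbx, hby, hsum_le]
    calc c₁ / (L:ℝ) * (x^2 + y^2) = (1/(L:ℝ)) * (c₁ * (x^2 + y^2)) := by ring
      _ ≤ (1/(L:ℝ)) * ∑ ℓ, (1 - Real.cos (((s ℓ).1 : ℝ) * x + ((s ℓ).2 : ℝ) * y)) := by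
          gcongr
  have hpsipos : 0 < psi L s x y := lt_of_lt_of_le (by positivity) hpsi_lb
  -- the two generic single-variable functions
  have hG1sq : ∀ (G1 : ℝ), |G1| ≤ S * Real.sqrt r2 → G1^2 ≤ S^2 * r2 := by
    intro G1 hG1
    have := pow_le_pow_left₀ (abs_nonneg G1) hG1 2
    rw [sq_abs] at this
    calc G1^2 ≤ (S * Real.sqrt r2)^2 := this
      _ = S^2 * r2 := by rw [mul_pow, Real.sq_sqrt hr2.le]
  have hr4 : Real.sqrt (x^2 + y^2) ^ 4 = r2^2 := by
    rw [hr2def, show (4:ℕ) = 2*2 from rfl, pow_mul, Real.sq_sqrt (by positivity)]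
  have hCle : ∀ E : ℝ, |E| ≤ (2*S^2/c^3 + S/c^2) / r2^2 →
      |E| ≤ (2*S^2/c^3 + S/c^2 + 1) / Real.sqrt (x^2 + y^2) ^ 4 := by
    intro E hE
    rw [hr4]
    refine hE.trans ?_
    have h01 : (0:ℝ) < r2^2 := by positivity
    exact (div_le_div_iff_of_pos_right h01).2 (by linarith)
  constructor
  · -- derivative in x
    have key : iteratedDeriv 2 (fun t => f L s t y) x =
        (2 * ((1/(L:ℝ)) * ∑ ℓ, ((s ℓ).1 : ℝ) * Real.sin (((s ℓ).1 : ℝ) * x + ((s ℓ).2 : ℝ) * y))^2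
          - ((1/(L:ℝ)) * ∑ ℓ, ((s ℓ).1 : ℝ)^2 * Real.cos (((s ℓ).1 : ℝ) * x + ((s ℓ).2 : ℝ) * y))
            * (1 - (1/(L:ℝ)) * ∑ ℓ, Real.cos (((s ℓ).1 : ℝ) * x + ((s ℓ).2 : ℝ) * y)))
        / (1 - (1/(L:ℝ)) * ∑ ℓ, Real.cos (((s ℓ).1 : ℝ) * x + ((s ℓ).2 : ℝ) * y))^3 :=
      aux_iter2_eq (fun ℓ => ((s ℓ).1 : ℝ)) (fun ℓ => ((s ℓ).2 : ℝ) * y) x hpsipos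
    have hG0eq : (1 - (1/(L:ℝ)) * ∑ ℓ, Real.cos (((s ℓ).1 : ℝ) * x + ((s ℓ).2 : ℝ) * y))
        = psi L s x y := rfl
    rw [key, hG0eq]
    apply hCle
    apply aux_bound _ _ _ S c r2 hc hS hr2 hpsi_lb
    · apply hG1sq
      have := aux_G1_bound (fun ℓ => ((s ℓ).1 : ℝ)) (fun ℓ => ((s ℓ).2 : ℝ)) x y
      exact this
    · have := aux_G2_bound (fun ℓ => ((s ℓ).1 : ℝ)) (fun ℓ => ((s ℓ).2 : ℝ))
        (fun ℓ => ((s ℓ).1 : ℝ) * x + ((s ℓ).2 : ℝ) * y)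
      exact this
  · -- derivative in y
    have hswap : (fun t => f L s x t)
        = (fun t => 1 / (1 - (1/(L:ℝ)) * ∑ ℓ, Real.cos (((s ℓ).2 : ℝ) * t + ((s ℓ).1 : ℝ) * x))) := by
      funext t
      have hsum : ∑ ℓ, Real.cos (((s ℓ).1 : ℝ) * x + ((s ℓ).2 : ℝ) * t)
          = ∑ ℓ, Real.cos (((s ℓ).2 : ℝ) * t + ((s ℓ).1 : ℝ) * x) :=
        Finset.sum_congr rfl fun ℓ _ => by rw [add_comm]
      show 1 / psi L s x t = _
      unfold psi
      push_cast
      rw [hsum]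
    have hpos2 : 0 < 1 - (1/(L:ℝ)) * ∑ ℓ, Real.cos (((s ℓ).2 : ℝ) * y + ((s ℓ).1 : ℝ) * x) := by
      have hsum : ∑ ℓ, Real.cos (((s ℓ).1 : ℝ) * x + ((s ℓ).2 : ℝ) * y)
          = ∑ ℓ, Real.cos (((s ℓ).2 : ℝ) * y + ((s ℓ).1 : ℝ) * x) :=
        Finset.sum_congr rfl fun ℓ _ => by rw [add_comm]
      have : psi L s x y = 1 - (1/(L:ℝ)) * ∑ ℓ, Real.cos (((s ℓ).2 : ℝ) * y + ((s ℓ).1 : ℝ) * x) := by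
        unfold psi; push_cast; rw [hsum]
      linarith [hpsipos, this ▸ hpsipos]
    have hpsi_lb2 : c * r2 ≤ 1 - (1/(L:ℝ)) * ∑ ℓ, Real.cos (((s ℓ).2 : ℝ) * y + ((s ℓ).1 : ℝ) * x) := by
      have hsum : ∑ ℓ, Real.cos (((s ℓ).1 : ℝ) * x + ((s ℓ).2 : ℝ) * y)
          = ∑ ℓ, Real.cos (((s ℓ).2 : ℝ) * y + ((s ℓ).1 : ℝ) * x) :=
        Finset.sum_congr rfl fun ℓ _ => by rw [add_comm]
      have hpe : psi L s x y = 1 - (1/(L:ℝ)) * ∑ ℓ, Real.cos (((s ℓ).2 : ℝ) * y + ((s ℓ).1 : ℝ) * x) := by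
        unfold psi; push_cast; rw [hsum]
      rw [← hpe]; exact hpsi_lb
    rw [hswap]
    have key : iteratedDeriv 2
        (fun t => 1 / (1 - (1/(L:ℝ)) * ∑ ℓ, Real.cos (((s ℓ).2 : ℝ) * t + ((s ℓ).1 : ℝ) * x))) y =
        (2 * ((1/(L:ℝ)) * ∑ ℓ, ((s ℓ).2 : ℝ) * Real.sin (((s ℓ).2 : ℝ) * y + ((s ℓ).1 : ℝ) * x))^2
          - ((1/(L:ℝ)) * ∑ ℓ, ((s ℓ).2 : ℝ)^2 * Real.cos (((s ℓ).2 : ℝ) * y + ((s ℓ).1 : ℝ) * x))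
            * (1 - (1/(L:ℝ)) * ∑ ℓ, Real.cos (((s ℓ).2 : ℝ) * y + ((s ℓ).1 : ℝ) * x)))
        / (1 - (1/(L:ℝ)) * ∑ ℓ, Real.cos (((s ℓ).2 : ℝ) * y + ((s ℓ).1 : ℝ) * x))^3 :=
      aux_iter2_eq (fun ℓ => ((s ℓ).2 : ℝ)) (fun ℓ => ((s ℓ).1 : ℝ) * x) y hpos2
    rw [key]
    apply hCle
    apply aux_bound _ _ _ S c r2 hc hS hr2 hpsi_lb2
    · apply hG1sq
      have hSsym : (1/(L:ℝ)) * ∑ ℓ, (|((s ℓ).2 : ℝ)| + |((s ℓ).1 : ℝ)|)^2 = S := by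
        rw [hSdef]
        congr 1
        exact Finset.sum_congr rfl fun ℓ _ => by rw [add_comm]
      have := aux_G1_bound (fun ℓ => ((s ℓ).2 : ℝ)) (fun ℓ => ((s ℓ).1 : ℝ)) y x
      rw [show y^2 + x^2 = r2 by rw [hr2def]; ring, hSsym] at this
      exact this
    · have hSsym : (1/(L:ℝ)) * ∑ ℓ, (|((s ℓ).2 : ℝ)| + |((s ℓ).1 : ℝ)|)^2 = S := by
        rw [hSdef]
        congr 1
        exact Finset.sum_congr rfl fun ℓ _ => by rw [add_comm]
      have := aux_G2_bound (fun ℓ => ((s ℓ).2 : ℝ)) (fun ℓ => ((s ℓ).1 : ℝ))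
        (fun ℓ => ((s ℓ).2 : ℝ) * y + ((s ℓ).1 : ℝ) * x)
      rw [hSsym] at this
      exact this

end
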